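/- Let (X1, X2) be a representation of the super Jordan plane on an n-dimensional k-vector space V and let {v1, …, vn} be a basis of V such that X1 v2 = v1 and X1 vi = 0 for all i ≠ 2 (i.e., the matrix of X1 in this basis is the matrix unit E12). Then there is no submodule L of V with V = span{v1} ⊕ L. -/

import Mathlib

/-- A subspace `W` is a submodule for the representation `(X1, X2)` of the super Jordan
plane if it is invariant under both `X1` and `X2`. -/
def IsSubrep {k V : Type*} [Field k] [AddCommGroup V] [Module k V]
    (X1 X2 : Module.End k V) (W : Submodule k V) : Prop :=
  Submodule.map X1 W ≤ W ∧ Submodule.map X2 W ≤ W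

/-- The representation `(X1, X2)` is indecomposable: `V ≠ 0` and `V` is not the direct
sum of two nonzero submodules. -/
def IsIndecomposable {k V : Type*} [Field k] [AddCommGroup V] [Module k V]
    (X1 X2 : Module.End k V) : Prop :=
  Nontrivial V ∧ ¬ ∃ W L : Submodule k V, IsSubrep X1 X2 W ∧ IsSubrep X1 X2 L ∧
    W ≠ ⊥ ∧ L ≠ ⊥ ∧ IsCompl W L

theorem stmt14 (k V : Type*) [Field k] [CharZero k] [AddCommGroup V] [Module k V]
    (n : ℕ) (hn : 2 ≤ n) (v : Module.Basis (Fin n) k V)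
    (X1 X2 : Module.End k V) (h1 : X1 * X1 = 0)
    (h2 : X2 ^ 2 * X1 = X1 * X2 ^ 2 + X1 * X2 * X1)
    (hv2 : X1 (v ⟨1, by omega⟩) = v ⟨0, by omega⟩)
    (hvi : ∀ i : Fin n, i ≠ ⟨1, by omega⟩ → X1 (v i) = 0) :
    ¬ ∃ L : Submodule k V, IsSubrep X1 X2 L ∧
        IsCompl (Submodule.span k {v ⟨0, by omega⟩}) L := by
  rintro ⟨L, ⟨hL1, _⟩, hcompl⟩
  set e0 := v ⟨0, by omega⟩ with he0
  set e1 := v ⟨1, by omega⟩ with he1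
  have hsup : e1 ∈ Submodule.span k {e0} ⊔ L := by
    rw [hcompl.sup_eq_top]; trivial
  obtain ⟨y, hy, z, hz, hyz⟩ := Submodule.mem_sup.mp hsup
  obtain ⟨c, hc⟩ := Submodule.mem_span_singleton.mp hy
  have hX1e0 : X1 e0 = 0 := hvi _ (by simp [Fin.ext_iff])
  have hX1z : X1 z = e0 := by
    have : X1 e1 = e0 := hv2
    rw [← hyz, map_add, ← hc, map_smul, hX1e0, smul_zero, zero_add] at this
    exact this
  have he0L : e0 ∈ L := hL1 ⟨z, hz, hX1z⟩
  have he0span : e0 ∈ Submodule.span k {e0} := Submodule.mem_span_singleton_self _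
  have : e0 = 0 := by
    have := hcompl.disjoint.le_bot ⟨he0span, he0L⟩
    simpa using this
  exact v.ne_zero _ this
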